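/- arXiv:1206.3426 — 2 statements merged into one kernel-verified Lean document; each statement's English description precedes it below -/
import Mathlib

section
/- Let f : [0,∞) → R satisfy: f ∈ C^1([0,∞)) ∩ C^3((σ,∞)), f' = 0 on [0,σ], f'' > 0 on (σ,∞), with σ > 0. Let a(s) = f'(s)/(s f''(s)) for s > σ. If there exists σ̃ > σ such that a is nondecreasing on (σ, σ̃), then lim_{s → σ⁺} a(s) = 0. -/
open Set Filter

/-- If `a(s) = f'(s)/(s f''(s))` is nondecreasing on `(σ, σ̃)` then `a(s) → 0` as `s → σ⁺`. -/
theorem stmt_6 (f : ℝ → ℝ) (σ σ' : ℝ) (hσ : 0 < σ) (hσ' : σ < σ')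
    (hC1 : ContDiffOn ℝ 1 f (Ici 0)) (hC3 : ContDiffOn ℝ 3 f (Ioi σ))
    (hf' : ∀ s ∈ Icc 0 σ, deriv f s = 0)
    (hf'' : ∀ s > σ, 0 < iteratedDeriv 2 f s)
    (hmono : MonotoneOn (fun s => deriv f s / (s * iteratedDeriv 2 f s)) (Ioo σ σ')) :
    Tendsto (fun s => deriv f s / (s * iteratedDeriv 2 f s))
      (nhdsWithin σ (Ioi σ)) (nhds 0) := by
  set a : ℝ → ℝ := fun s => deriv f s / (s * iteratedDeriv 2 f s) with ha
  have hiter : iteratedDeriv 2 f = deriv (deriv f) := by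
    rw [iteratedDeriv_succ, iteratedDeriv_one]
  have hcd : ContinuousOn (deriv f) (Ioi 0) :=
    (hC1.mono (Ioi_subset_Ici le_rfl)).continuousOn_deriv_of_isOpen isOpen_Ioi le_rfl
  have hfσ : deriv f σ = 0 := hf' σ ⟨hσ.le, le_rfl⟩
  have h2 : ContDiffOn ℝ 2 (deriv f) (Ioi σ) :=
    hC3.deriv_of_isOpen isOpen_Ioi (by norm_num)
  have hdd : ∀ x ∈ Ioi σ, HasDerivAt (deriv f) (iteratedDeriv 2 f x) x := by
    intro x hx
    have := ((h2.differentiableOn (by norm_num)).differentiableAt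
      (isOpen_Ioi.mem_nhds hx)).hasDerivAt
    rwa [hiter]
  have hsm : StrictMonoOn (deriv f) (Ici σ) := by
    apply strictMonoOn_of_deriv_pos (convex_Ici σ)
    · exact hcd.mono (fun x hx => lt_of_lt_of_le hσ hx)
    · intro x hx
      rw [interior_Ici] at hx
      rw [← hiter]
      exact hf'' x hx
  have hf'pos : ∀ s ∈ Ioi σ, 0 < deriv f s := by
    intro s hs
    have := hsm (self_mem_Ici) (mem_Ici.mpr (le_of_lt hs)) hs
    rwa [hfσ] at this
  have hapos : ∀ s ∈ Ioi σ, 0 < a s := by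
    intro s hs
    exact div_pos (hf'pos s hs) (mul_pos (hσ.trans hs) (hf'' s hs))
  -- main step: for every ε > 0, there is s0 ∈ Ioo σ σ' with a s0 < ε
  have key : ∀ ε > (0:ℝ), ∃ s0 ∈ Ioo σ σ', a s0 < ε := by
    intro ε hε
    by_contra hcon
    push_neg at hcon
    set g : ℝ → ℝ := fun s => Real.log (deriv f s) - (1/ε) * Real.log s with hg
    have hgd : ∀ x ∈ Ioi σ, HasDerivAt g
        (iteratedDeriv 2 f x / deriv f x - (1/ε) * x⁻¹) x := by
      intro x hx
      exact ((hdd x hx).log (ne_of_gt (hf'pos x hx))).sub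
        ((Real.hasDerivAt_log (ne_of_gt (hσ.trans hx))).const_mul (1/ε))
    have hganti : AntitoneOn g (Ioo σ σ') := by
      apply antitoneOn_of_deriv_nonpos (convex_Ioo σ σ')
      · exact fun x hx => ((hgd x hx.1).continuousAt).continuousWithinAt
      · intro x hx
        rw [interior_Ioo] at hx
        exact (hgd x hx.1).differentiableAt.differentiableWithinAt
      · intro x hx
        rw [interior_Ioo] at hx
        rw [(hgd x hx.1).deriv]
        have hf'x := hf'pos x hx.1
        have hf''x := hf'' x hx.1
        have hxpos : (0:ℝ) < x := hσ.trans hx.1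
        have haε : ε ≤ a x := hcon x hx
        have h1 : ε * (x * iteratedDeriv 2 f x) ≤ deriv f x :=
          (le_div_iff₀ (mul_pos hxpos hf''x)).mp haε
        have h2 : iteratedDeriv 2 f x / deriv f x ≤ 1 / (ε * x) := by
          rw [div_le_div_iff₀ hf'x (by positivity)]
          nlinarith
        have h3 : (1:ℝ) / (ε * x) = (1/ε) * x⁻¹ := by
          field_simp
        linarith [h3 ▸ h2]
    -- pick midpoint t0
    set t0 : ℝ := (σ + σ') / 2 with ht0
    have ht0mem : t0 ∈ Ioo σ σ' := ⟨by linarith, by linarith⟩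
    -- lower bound for deriv f on Ioo σ t0
    set c : ℝ := Real.exp (g t0 + (1/ε) * Real.log σ) with hc
    have hcpos : 0 < c := Real.exp_pos _
    have hlb : ∀ s ∈ Ioo σ t0, c ≤ deriv f s := by
      intro s hs
      have hsmem : s ∈ Ioo σ σ' := ⟨hs.1, hs.2.trans ht0mem.2⟩
      have hge : g t0 ≤ g s := hganti hsmem ht0mem hs.2.le
      have hlog : Real.log σ ≤ Real.log s :=
        Real.log_le_log hσ hs.1.le
      have : g t0 + (1/ε) * Real.log σ ≤ Real.log (deriv f s) := by
        have : (1/ε) * Real.log σ ≤ (1/ε) * Real.log s :=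
          mul_le_mul_of_nonneg_left hlog (by positivity)
        simp only [hg] at hge
        linarith
      calc c = Real.exp (g t0 + (1/ε) * Real.log σ) := rfl
        _ ≤ Real.exp (Real.log (deriv f s)) := Real.exp_le_exp.2 this
        _ = deriv f s := Real.exp_log (hf'pos s hs.1)
    -- but deriv f → 0 at σ from the right
    have htend : Tendsto (deriv f) (nhdsWithin σ (Ioi σ)) (nhds 0) := by
      have : ContinuousWithinAt (deriv f) (Ioi 0) σ := hcd σ hσ
      have h := this.mono (Ioi_subset_Ioi hσ.le)
      rw [ContinuousWithinAt, hfσ] at h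
      exact h
    have hev : ∀ᶠ s in nhdsWithin σ (Ioi σ), deriv f s < c :=
      htend.eventually (eventually_lt_nhds hcpos)
    have hev2 : ∀ᶠ s in nhdsWithin σ (Ioi σ), s ∈ Ioo σ t0 := by
      apply Ioo_mem_nhdsGT_of_mem ⟨le_rfl, ht0mem.1⟩
    have : ∀ᶠ s in nhdsWithin σ (Ioi σ), False := by
      filter_upwards [hev, hev2] with s h1 h2
      exact absurd (hlb s h2) (not_le.mpr h1)
    exact this.exists.elim (fun _ h => h) |>.elim
  -- conclude via monotonicity and squeeze
  rw [Metric.tendsto_nhdsWithin_nhds]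
  intro ε hε
  obtain ⟨s0, hs0, has0⟩ := key ε hε
  refine ⟨s0 - σ, by linarith [hs0.1], fun s hs hd => ?_⟩
  rw [Real.dist_eq, abs_lt] at hd
  have hsmem : s ∈ Ioo σ σ' := ⟨hs, by linarith [hs0.2]⟩
  have hle : a s ≤ a s0 := hmono hsmem hs0 (by linarith)
  have hpos := hapos s hs
  rw [Real.dist_eq, sub_zero, abs_of_pos hpos]
  linarith
end

section
/- Let g : [0,∞) → R be convex differentiable with g' continuous, nondecreasing, nonnegative, and let ψ(t) = ∫₀ᵗ g'((ρ/(N−1))(e^{(N−1)(R−s)/ρ} − 1)) ds with ρ > 0, N ≥ 2, R > 0. Writing f = g* (so f' = (g')^{-1} in the appropriate sense) and assuming f ∈ C^3 with f'' > 0 where defined, the function ψ satisfies the ODE ψ''(t) f''(ψ'(t)) + ((N−1)/ρ) f'(ψ'(t)) + 1 = 0 for t ∈ (0, R) whenever ψ'(t) > σ. -/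
open Set

/-- The barrier `ψ` satisfies the ODE `ψ'' f''(ψ') + ((N−1)/ρ) f'(ψ') + 1 = 0`
wherever `ψ' > σ`. -/
theorem stmt_11 (f g' : ℝ → ℝ) (σ ρ R : ℝ) (N : ℕ)
    (hN : 2 ≤ N) (hρ : 0 < ρ) (hR : 0 < R) (hσ : 0 < σ)
    (hC1 : ContDiffOn ℝ 1 f (Ici 0)) (hC3 : ContDiffOn ℝ 3 f (Ioi σ))
    (hf'' : ∀ s > σ, 0 < iteratedDeriv 2 f s)
    (hf'0 : ∀ s ∈ Icc 0 σ, deriv f s = 0)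
    (hg'cont : ContinuousOn g' (Ici 0)) (hg'diff : DifferentiableOn ℝ g' (Ioi 0))
    (hinv₁ : ∀ t > (0:ℝ), deriv f (g' t) = t)
    (hinv₂ : ∀ s > σ, g' (deriv f s) = s)
    (ψ : ℝ → ℝ)
    (hψ : ∀ t, ψ t = ∫ s in (0:ℝ)..t,
      g' ((ρ/((N:ℝ)-1)) * (Real.exp (((N:ℝ)-1)*(R-s)/ρ) - 1))) :
    ∀ t ∈ Ioo (0:ℝ) R, σ < deriv ψ t →
      deriv (deriv ψ) t * iteratedDeriv 2 f (deriv ψ t) +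
        (((N:ℝ)-1)/ρ) * deriv f (deriv ψ t) + 1 = 0 := by
  have hc : (0:ℝ) < (N:ℝ) - 1 := by
    have : (2:ℝ) ≤ (N:ℝ) := by exact_mod_cast hN
    linarith
  set c : ℝ := (N:ℝ) - 1 with hcdef
  set u : ℝ → ℝ := fun s => ρ/c * (Real.exp (c*(R-s)/ρ) - 1) with hudef
  have hcne : c ≠ 0 := ne_of_gt hc
  have hρne : ρ ≠ 0 := ne_of_gt hρ
  -- derivative of u
  have hu : ∀ s : ℝ, HasDerivAt u (-Real.exp (c*(R-s)/ρ)) s := by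
    intro s
    have h1 : HasDerivAt (fun x : ℝ => c*(R-x)/ρ) (c * (-1) / ρ) s :=
      (((hasDerivAt_id s).const_sub R).const_mul c).div_const ρ
    have h2 := (h1.exp.sub_const 1).const_mul (ρ/c)
    convert h2 using 1 <;> try rfl
    field_simp
  have hucont : Continuous u := by
    exact continuous_const.mul ((Real.continuous_exp.comp (by continuity)).sub continuous_const)
  -- positivity of u
  have hupos : ∀ s : ℝ, s < R → 0 < u s := by
    intro s hs
    have hRs : (0:ℝ) < R - s := by linarith
    have h0 : (0:ℝ) < c*(R-s)/ρ := div_pos (mul_pos hc hRs) hρ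
    have : (1:ℝ) < Real.exp (c*(R-s)/ρ) := by
      calc (1:ℝ) = Real.exp 0 := by simp
        _ < _ := Real.exp_lt_exp.mpr h0
    have h2 : 0 < Real.exp (c*(R-s)/ρ) - 1 := by linarith
    have : u s = ρ/c * (Real.exp (c*(R-s)/ρ) - 1) := rfl
    rw [this]; exact mul_pos (div_pos hρ hc) h2
  -- h := g' ∘ u is continuous on Iio R
  have hcontOn : ContinuousOn (fun s => g' (u s)) (Iio R) := by
    intro s hs
    have hca : ContinuousAt g' (u s) :=
      hg'cont.continuousAt (Ici_mem_nhds (hupos s hs))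
    exact (hca.comp hucont.continuousAt).continuousWithinAt
  -- ψ' = g' ∘ u on Ioo 0 R
  have hψeq : ψ = fun x => ∫ s in (0:ℝ)..x, g' (u s) := by
    funext x; rw [hψ]
  have hψd : ∀ s ∈ Ioo (0:ℝ) R, HasDerivAt ψ (g' (u s)) s := by
    intro s hs
    have hsub : uIcc (0:ℝ) s ⊆ Iio R := by
      rw [uIcc_of_le hs.1.le]
      intro x hx
      exact lt_of_le_of_lt hx.2 hs.2
    have hint : IntervalIntegrable (fun s => g' (u s)) MeasureTheory.volume 0 s :=
      (hcontOn.mono hsub).intervalIntegrable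
    have hmeas : StronglyMeasurableAtFilter (fun s => g' (u s)) (nhds s) :=
      hcontOn.stronglyMeasurableAtFilter isOpen_Iio s hs.2
    have hca : ContinuousAt (fun s => g' (u s)) s :=
      (hg'cont.continuousAt (Ici_mem_nhds (hupos s hs.2))).comp hucont.continuousAt
    have := intervalIntegral.integral_hasDerivAt_right hint hmeas hca
    rw [hψeq]
    exact this
  intro t ht hσt
  have hEq : Ioo (0:ℝ) R ∈ nhds t := isOpen_Ioo.mem_nhds ht
  have hevd : deriv ψ =ᶠ[nhds t] fun s => g' (u s) :=
    Filter.eventuallyEq_of_mem hEq (fun s hs => (hψd s hs).deriv)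
  -- second derivative of ψ
  have hg'at : HasDerivAt g' (deriv g' (u t)) (u t) :=
    (hg'diff.differentiableAt (isOpen_Ioi.mem_nhds (hupos t ht.2))).hasDerivAt
  have hφ : HasDerivAt (fun s => g' (u s)) (deriv g' (u t) * (-Real.exp (c*(R-t)/ρ))) t :=
    hg'at.comp t (hu t)
  have hψ'' : HasDerivAt (deriv ψ) (deriv g' (u t) * (-Real.exp (c*(R-t)/ρ))) t :=
    hφ.congr_of_eventuallyEq hevd
  set G : ℝ := deriv g' (u t) * (-Real.exp (c*(R-t)/ρ)) with hGdef
  -- f' differentiable at ψ' t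
  have hdf2 : ContDiffOn ℝ 2 (deriv f) (Ioi σ) := by
    exact hC3.deriv_of_isOpen isOpen_Ioi (by norm_num)
  have hdfat : HasDerivAt (deriv f) (deriv (deriv f) (deriv ψ t)) (deriv ψ t) :=
    ((hdf2.differentiableOn (by norm_num)).differentiableAt
      (isOpen_Ioi.mem_nhds hσt)).hasDerivAt
  have hF : HasDerivAt (fun s => deriv f (deriv ψ s)) (deriv (deriv f) (deriv ψ t) * G) t :=
    hdfat.comp t hψ''
  -- F = u near t
  have hFu : (fun s => u s) =ᶠ[nhds t] (fun s => deriv f (deriv ψ s)) := by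
    refine Filter.eventuallyEq_of_mem hEq (fun s hs => ?_)
    have h1 : deriv ψ s = g' (u s) := (hψd s hs).deriv
    rw [h1, hinv₁ (u s) (hupos s hs.2)]
  have hu2 : HasDerivAt u (deriv (deriv f) (deriv ψ t) * G) t :=
    hF.congr_of_eventuallyEq hFu
  have huniq : deriv (deriv f) (deriv ψ t) * G = -Real.exp (c*(R-t)/ρ) :=
    hu2.unique (hu t)
  -- assemble
  have hψ't : deriv ψ t = g' (u t) := (hψd t ht).deriv
  have hf'val : deriv f (deriv ψ t) = u t := by
    rw [hψ't, hinv₁ (u t) (hupos t ht.2)]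
  have hit2 : iteratedDeriv 2 f (deriv ψ t) = deriv (deriv f) (deriv ψ t) := by
    rw [show (2:ℕ) = 1 + 1 from rfl, iteratedDeriv_succ, iteratedDeriv_one]
  have hGval : deriv (deriv ψ) t = G := hψ''.deriv
  have hexp : -Real.exp (c*(R-t)/ρ) = -(c/ρ * u t + 1) := by
    have : u t = ρ/c * (Real.exp (c*(R-t)/ρ) - 1) := rfl
    rw [this]
    field_simp
    ring
  rw [hGval, hit2, hf'val]
  rw [hexp] at huniq
  nlinarith [huniq]
end
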